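/- Let φ' : Cay(G₁, R) → G₂' be the I-system morphism φ'(g) = (0, φ₀(g)), and for g̃₁ ∈ G₁ let φ_{g̃₁} ∈ Aut_I(Cay(G₁, R)) be the automorphism g ↦ g·g̃₁⁻¹. Then a pair (φ_{g̃₁}, Φ_{g̃₂}) satisfies Φ_{g̃₂} ∘ φ' = φ' ∘ φ_{g̃₁} if and only if (g̃₁, g̃₂) ∈ H; consequently Aut_I(φ') = {(φ_{g̃₁}, Φ_{g̃₂}) | (g̃₁, g̃₂) ∈ H} and Aut_I(φ') ≅ H. -/

import Mathlib

universe u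

section GoursatSetup

variable {G₁ G₂ : Type u} [Group G₁] [Group G₂]

/-- `π₁(H)`, the projection of `H` to the first factor. -/
def projFst (H : Subgroup (G₁ × G₂)) : Subgroup G₁ := H.map (MonoidHom.fst G₁ G₂)

/-- `π₂(H)`, the projection of `H` to the second factor. -/
def projSnd (H : Subgroup (G₁ × G₂)) : Subgroup G₂ := H.map (MonoidHom.snd G₁ G₂)

/-- `ι₁⁻¹(H) = {g ∈ G₁ | (g, e) ∈ H}`. -/
def kerFst (H : Subgroup (G₁ × G₂)) : Subgroup G₁ := H.comap (MonoidHom.inl G₁ G₂)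

/-- `ι₂⁻¹(H) = {g ∈ G₂ | (e, g) ∈ H}`. -/
def kerSnd (H : Subgroup (G₁ × G₂)) : Subgroup G₂ := H.comap (MonoidHom.inr G₁ G₂)

theorem kerFst_le_projFst (H : Subgroup (G₁ × G₂)) : kerFst H ≤ projFst H :=
  fun g hg => ⟨(g, 1), hg, rfl⟩

theorem kerSnd_le_projSnd (H : Subgroup (G₁ × G₂)) : kerSnd H ≤ projSnd H :=
  fun g hg => ⟨(1, g), hg, rfl⟩

/-- `ι₁⁻¹(H)` is a normal subgroup of `π₁(H)`. -/
instance kerFst_normal (H : Subgroup (G₁ × G₂)) :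
    ((kerFst H).subgroupOf (projFst H)).Normal := by
  constructor
  intro n hn g
  rw [Subgroup.mem_subgroupOf] at hn ⊢
  obtain ⟨x, hxH, hx⟩ := g.2
  have key : x * (((n : G₁), 1) : G₁ × G₂) * x⁻¹ ∈ H :=
    mul_mem (mul_mem hxH hn) (inv_mem hxH)
  have : x * (((n : G₁), 1) : G₁ × G₂) * x⁻¹ = (((g * n * g⁻¹ : projFst H) : G₁), 1) := by
    ext
    · simp [← hx]
    · simp
  rwa [this] at key

/-- `ι₂⁻¹(H)` is a normal subgroup of `π₂(H)`. -/
instance kerSnd_normal (H : Subgroup (G₁ × G₂)) :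
    ((kerSnd H).subgroupOf (projSnd H)).Normal := by
  constructor
  intro n hn g
  rw [Subgroup.mem_subgroupOf] at hn ⊢
  obtain ⟨x, hxH, hx⟩ := g.2
  have key : x * ((1, (n : G₂)) : G₁ × G₂) * x⁻¹ ∈ H :=
    mul_mem (mul_mem hxH hn) (inv_mem hxH)
  have : x * ((1, (n : G₂)) : G₁ × G₂) * x⁻¹ = (1, ((g * n * g⁻¹ : projSnd H) : G₂)) := by
    ext
    · simp
    · simp [← hx]
  rwa [this] at key

/-- The quotient `V₁ = π₁(H)/ι₁⁻¹(H)`. -/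
abbrev QuotFst (H : Subgroup (G₁ × G₂)) := projFst H ⧸ (kerFst H).subgroupOf (projFst H)

/-- The quotient `π₂(H)/ι₂⁻¹(H)`. -/
abbrev QuotSnd (H : Subgroup (G₁ × G₂)) := projSnd H ⧸ (kerSnd H).subgroupOf (projSnd H)

/-- The vertex set of the auxiliary system `G_{ι₁}` : it is `V₁` if `π₁(H) = G₁`
(the extra summand is then empty) and `V₁ ⊔ {s}` otherwise. -/
abbrev AuxVert (H : Subgroup (G₁ × G₂)) := QuotFst H ⊕ PLift (projFst H ≠ ⊤)

/-- The auxiliary binary relational system `G_{ι₁}` over the label set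
`I₁ = I_{ι₁} ⊔ (J₁ \ {0})`. -/
def auxRel (H : Subgroup (G₁ × G₂)) {Iι J₁ : Type u} (j₁0 : J₁) (r : J₁ → G₁) :
    (Iι ⊕ {j : J₁ // j ≠ j₁0}) → AuxVert H → AuxVert H → Prop
  | _,      .inr _, .inr _ => True
  | .inl _, .inl a, .inl b => b = a
  | .inr j, .inl a, .inl b =>
      ∃ h : r j.val ∈ projFst H, b = QuotientGroup.mk ⟨r j.val, h⟩ * a
  | .inl _, .inl _, .inr _ => False
  | .inl _, .inr _, .inl _ => False
  | .inr j, .inl _, .inr _ => r j.val ∉ projFst H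
  | .inr j, .inr _, .inl _ => r j.val ∉ projFst H

/-- The generating family `R = (r_i)_{i ∈ I₁}` of `G₁`. -/
def cayGenFst (H : Subgroup (G₁ × G₂)) {Iι J₁ : Type u} (rι : Iι → kerFst H) (j₁0 : J₁)
    (r : J₁ → G₁) : (Iι ⊕ {j : J₁ // j ≠ j₁0}) → G₁
  | .inl i => (rι i : G₁)
  | .inr j => r j.val

/-- The Cayley diagram `Cay(G₁, R)` as an `I₁`-system. -/
def cayRelFst (H : Subgroup (G₁ × G₂)) {Iι J₁ : Type u} (rι : Iι → kerFst H) (j₁0 : J₁)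
    (r : J₁ → G₁) (i : Iι ⊕ {j : J₁ // j ≠ j₁0}) (g g' : G₁) : Prop :=
  g' = cayGenFst H rι j₁0 r i * g

/-- The map `φ₀ : G₁ → V(G_{ι₁})`, sending `g` to `[g]` if `g ∈ π₁(H)` and to `s`
otherwise. -/
noncomputable def phiZero (H : Subgroup (G₁ × G₂)) (g : G₁) : AuxVert H :=
  letI := Classical.dec (g ∈ projFst H)
  if h : g ∈ projFst H then .inl (QuotientGroup.mk ⟨g, h⟩)
  else .inr ⟨fun hP => h (by rw [hP]; exact Subgroup.mem_top g)⟩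

end GoursatSetup

section MainSystem

variable {G₁ G₂ : Type u} [Group G₁] [Group G₂]

/-- The vertex set of the system `G₂'`: `G₂ ⊔ (⊔_{j ∈ J₂} V₂ʲ)` with
`V₂ʲ = {j} × V(G_{ι₁})`. -/
abbrev MainVert (H : Subgroup (G₁ × G₂)) (J₂ : Type u) := G₂ ⊕ (J₂ × AuxVert H)

/-- The full label set `I = I₁ ⊔ I₂ ⊔ {θ}`. -/
abbrev FullLabel (Iι J₁ Iπ J₂ : Type u) (j₁0 : J₁) (j₂0 : J₂) :=
  (Iι ⊕ {j : J₁ // j ≠ j₁0}) ⊕ ((Iπ ⊕ {j : J₂ // j ≠ j₂0}) ⊕ PUnit.{u + 1})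

/-- The generating family `S = (s_i)_{i ∈ I₂}` of `G₂`. -/
def cayGenSnd (H : Subgroup (G₁ × G₂)) {Iπ J₂ : Type u} (sπ : Iπ → projSnd H) (j₂0 : J₂)
    (s : J₂ → G₂) : (Iπ ⊕ {j : J₂ // j ≠ j₂0}) → G₂
  | .inl i => (sπ i : G₂)
  | .inr j => s j.val

/-- The binary relational system `G₂'` over the label set `I = I₁ ⊔ I₂ ⊔ {θ}`. -/
def mainRel (H : Subgroup (G₁ × G₂)) {Iι J₁ Iπ J₂ : Type u} (j₁0 : J₁) (r : J₁ → G₁)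
    (sπ : Iπ → projSnd H) (j₂0 : J₂) (s : J₂ → G₂)
    (k₂ : G₂ → projSnd H) (jj₂ : G₂ → J₂) (θ : QuotFst H ≃* QuotSnd H) :
    FullLabel Iι J₁ Iπ J₂ j₁0 j₂0 → MainVert H J₂ → MainVert H J₂ → Prop
  | .inl i₁, .inr (j, v), .inr (j', v') => j' = j ∧ auxRel H j₁0 r i₁ v v'
  | .inr (.inl i₂), .inl g, .inl g' => g' = cayGenSnd H sπ j₂0 s i₂ * g
  | .inr (.inr _), .inl g, .inr (j, v) =>
      j = jj₂ g ∧ v = .inl (θ.symm (QuotientGroup.mk (k₂ g)))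
  | _, _, _ => False

/-- The self-map `Φ_{g̃}` of the vertex set of `G₂'` induced by `g̃ ∈ G₂`. -/
def mainPhi (H : Subgroup (G₁ × G₂)) {J₂ : Type u} (s : J₂ → G₂)
    (k₂ : G₂ → projSnd H) (jj₂ : G₂ → J₂) (θ : QuotFst H ≃* QuotSnd H)
    (gt : G₂) : MainVert H J₂ → MainVert H J₂
  | .inl g => .inl (g * gt⁻¹)
  | .inr (j, .inl a) =>
      .inr (jj₂ (s j * gt⁻¹),
        .inl (a * θ.symm (QuotientGroup.mk (k₂ (s j * gt⁻¹)))))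
  | .inr (j, .inr u) => .inr (jj₂ (s j * gt⁻¹), .inr u)

/-- The Cayley diagram `Cay(G₁, R)` viewed as an `I`-system over the full label set,
with no edges of label outside `I₁`. -/
def cayRelFull (H : Subgroup (G₁ × G₂)) {Iι J₁ Iπ J₂ : Type u} (rι : Iι → kerFst H)
    (j₁0 : J₁) (r : J₁ → G₁) (j₂0 : J₂) :
    FullLabel Iι J₁ Iπ J₂ j₁0 j₂0 → G₁ → G₁ → Prop
  | .inl i₁ => fun g g' => g' = cayGenFst H rι j₁0 r i₁ * g
  | .inr _ => fun _ _ => False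

/-- The morphism `φ' : Cay(G₁, R) → G₂'`, `φ'(g) = (0, φ₀(g))`. -/
noncomputable def mainArrow (H : Subgroup (G₁ × G₂)) {J₂ : Type u} (j₂0 : J₂) (g : G₁) :
    MainVert H J₂ :=
  .inr (j₂0, phiZero H g)

end MainSystem

/-- The automorphism group of a binary relational system `R` over a label set `I`,
as a subgroup of the permutations of the vertex set. -/
def relAut {I V : Type*} (R : I → V → V → Prop) : Subgroup (Equiv.Perm V) where
  carrier := {e | ∀ i v w, R i v w ↔ R i (e v) (e w)}
  one_mem' := by intro i v w; simp
  mul_mem' := by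
    intro a b ha hb i v w
    simpa [Equiv.Perm.mul_apply] using (hb i v w).trans (ha i (b v) (b w))
  inv_mem' := by
    intro a ha i v w
    simpa [Equiv.Perm.inv_def, Equiv.apply_symm_apply] using (ha i (a⁻¹ v) (a⁻¹ w)).symm

/-- The automorphism group of a morphism of binary relational systems, i.e. the subgroup of
`Aut(R₁) × Aut(R₂)` of pairs commuting with `f`. -/
def relArrowAut {I V₁ V₂ : Type*} (R₁ : I → V₁ → V₁ → Prop) (R₂ : I → V₂ → V₂ → Prop)
    (f : V₁ → V₂) : Subgroup (relAut R₁ × relAut R₂) where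
  carrier := {p | ∀ v, f ((p.1 : Equiv.Perm V₁) v) = (p.2 : Equiv.Perm V₂) (f v)}
  one_mem' := by intro v; simp
  mul_mem' := by
    intro a b ha hb v
    simp only [Prod.fst_mul, Prod.snd_mul, Subgroup.coe_mul, Equiv.Perm.mul_apply]
    rw [ha ((b.1 : Equiv.Perm V₁) v), hb v]
  inv_mem' := by
    intro a ha v
    simp only [Prod.fst_inv, Prod.snd_inv, Subgroup.coe_inv]
    have h := ha ((a.1 : Equiv.Perm V₁)⁻¹ v)
    simp only [Equiv.Perm.inv_def, Equiv.apply_symm_apply] at h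
    rw [Equiv.Perm.inv_def, Equiv.Perm.inv_def, h, Equiv.symm_apply_apply]

section AuxLemmas

variable {G₁ G₂ : Type u} [Group G₁] [Group G₂]
variable (H : Subgroup (G₁ × G₂)) {Iι J₁ Iπ J₂ : Type u}

theorem k2_mul (s : J₂ → G₂) (k₂ : G₂ → projSnd H) (jj₂ : G₂ → J₂)
    (hdec : ∀ g : G₂, (k₂ g : G₂) * s (jj₂ g) = g)
    (huniq : ∀ (g : G₂) (κ : projSnd H) (l : J₂), (κ : G₂) * s l = g → κ = k₂ g ∧ l = jj₂ g)
    (κ : projSnd H) (g : G₂) :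
    k₂ ((κ : G₂) * g) = κ * k₂ g ∧ jj₂ ((κ : G₂) * g) = jj₂ g := by
  have h := huniq ((κ : G₂) * g) (κ * k₂ g) (jj₂ g) (by
    push_cast; rw [mul_assoc, hdec])
  exact ⟨h.1.symm, h.2.symm⟩

theorem k2_s (s : J₂ → G₂) (k₂ : G₂ → projSnd H) (jj₂ : G₂ → J₂)
    (huniq : ∀ (g : G₂) (κ : projSnd H) (l : J₂), (κ : G₂) * s l = g → κ = k₂ g ∧ l = jj₂ g)
    (j : J₂) : k₂ (s j) = 1 ∧ jj₂ (s j) = j := by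
  have h := huniq (s j) 1 j (by simp)
  exact ⟨h.1.symm, h.2.symm⟩

theorem phiZero_pos {g : G₁} (h : g ∈ projFst H) :
    phiZero H g = .inl (QuotientGroup.mk ⟨g, h⟩) := by
  simp only [phiZero]
  rw [dif_pos h]

theorem phiZero_neg {g : G₁} (h : g ∉ projFst H) (u : PLift (projFst H ≠ ⊤)) :
    phiZero H g = .inr u := by
  simp only [phiZero]
  rw [dif_neg h]

theorem cayGenFst_top (rι : Iι → kerFst H) (j₁0 : J₁) (r : J₁ → G₁)
    (hr0 : r j₁0 = 1)
    (hcos : ∀ g : G₁, ∃! j : J₁, g * (r j)⁻¹ ∈ kerFst H)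
    (hKgen : Subgroup.closure (Set.range fun i => ((rι i : G₁))) = kerFst H) :
    Subgroup.closure (Set.range (cayGenFst H rι j₁0 r)) = ⊤ := by
  rw [eq_top_iff]
  intro g _
  have hK : kerFst H ≤ Subgroup.closure (Set.range (cayGenFst H rι j₁0 r)) := by
    rw [← hKgen]
    apply Subgroup.closure_mono
    rintro _ ⟨i, rfl⟩
    exact ⟨.inl i, rfl⟩
  obtain ⟨j, hj, -⟩ := hcos g
  by_cases hjj : j = j₁0
  · subst hjj
    rw [hr0, inv_one, mul_one] at hj
    exact hK hj
  · have hr : r j ∈ Subgroup.closure (Set.range (cayGenFst H rι j₁0 r)) :=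
      Subgroup.subset_closure ⟨.inr ⟨j, hjj⟩, rfl⟩
    have := mul_mem (hK hj) hr
    rwa [inv_mul_cancel_right] at this

theorem cayGenSnd_top (sπ : Iπ → projSnd H) (j₂0 : J₂) (s : J₂ → G₂)
    (k₂ : G₂ → projSnd H) (jj₂ : G₂ → J₂)
    (hs0 : s j₂0 = 1)
    (hPgen : Subgroup.closure (Set.range fun i => ((sπ i : G₂))) = projSnd H)
    (hdec : ∀ g : G₂, (k₂ g : G₂) * s (jj₂ g) = g) :
    Subgroup.closure (Set.range (cayGenSnd H sπ j₂0 s)) = ⊤ := by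
  rw [eq_top_iff]
  intro g _
  have hP : (projSnd H : Set G₂) ⊆ Subgroup.closure (Set.range (cayGenSnd H sπ j₂0 s)) := by
    rw [← hPgen]
    apply Subgroup.closure_mono
    rintro _ ⟨i, rfl⟩
    exact ⟨.inl i, rfl⟩
  have hs : s (jj₂ g) ∈ Subgroup.closure (Set.range (cayGenSnd H sπ j₂0 s)) := by
    by_cases hjj : jj₂ g = j₂0
    · rw [hjj, hs0]; exact one_mem _
    · exact Subgroup.subset_closure ⟨.inr ⟨jj₂ g, hjj⟩, rfl⟩
  have := mul_mem (hP (k₂ g).2) hs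
  rwa [hdec] at this

end AuxLemmas
section PhiLemmas

variable {G₁ G₂ : Type u} [Group G₁] [Group G₂]
variable (H : Subgroup (G₁ × G₂)) {Iι J₁ Iπ J₂ : Type u}
variable (s : J₂ → G₂) (k₂ : G₂ → projSnd H) (jj₂ : G₂ → J₂) (θ : QuotFst H ≃* QuotSnd H)
variable (hdec : ∀ g : G₂, (k₂ g : G₂) * s (jj₂ g) = g)
variable (huniq : ∀ (g : G₂) (κ : projSnd H) (l : J₂), (κ : G₂) * s l = g → κ = k₂ g ∧ l = jj₂ g)

include hdec huniq in
theorem mainPhi_mul (a b : G₂) (v : MainVert H J₂) :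
    mainPhi H s k₂ jj₂ θ a (mainPhi H s k₂ jj₂ θ b v) = mainPhi H s k₂ jj₂ θ (a * b) v := by
  have key : ∀ j : J₂, s j * (a * b)⁻¹ =
      (k₂ (s j * b⁻¹) : G₂) * (s (jj₂ (s j * b⁻¹)) * a⁻¹) := by
    intro j
    conv_lhs => rw [mul_inv_rev, ← mul_assoc, ← hdec (s j * b⁻¹)]
    rw [mul_assoc]
  have hk : ∀ j : J₂, k₂ (s j * (a * b)⁻¹)
        = k₂ (s j * b⁻¹) * k₂ (s (jj₂ (s j * b⁻¹)) * a⁻¹)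
      ∧ jj₂ (s j * (a * b)⁻¹) = jj₂ (s (jj₂ (s j * b⁻¹)) * a⁻¹) := by
    intro j
    rw [key j]
    exact k2_mul H s k₂ jj₂ hdec huniq _ _
  match v with
  | .inl g => simp only [mainPhi, mul_inv_rev, mul_assoc]
  | .inr (j, .inl x) =>
    simp only [mainPhi]
    rw [(hk j).1, (hk j).2, QuotientGroup.mk_mul, map_mul, mul_assoc]
  | .inr (j, .inr u) =>
    simp only [mainPhi]
    rw [(hk j).2]

include huniq in
theorem mainPhi_one (v : MainVert H J₂) : mainPhi H s k₂ jj₂ θ 1 v = v := by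
  match v with
  | .inl g => simp [mainPhi]
  | .inr (j, .inl x) =>
    simp only [mainPhi, inv_one, mul_one]
    rw [(k2_s H s k₂ jj₂ huniq j).1, (k2_s H s k₂ jj₂ huniq j).2]
    simp
  | .inr (j, .inr u) =>
    simp only [mainPhi, inv_one, mul_one]
    rw [(k2_s H s k₂ jj₂ huniq j).2]

/-- `Φ_{g̃}` as a permutation. -/
def mainPhiPerm (hdec : ∀ g : G₂, (k₂ g : G₂) * s (jj₂ g) = g)
    (huniq : ∀ (g : G₂) (κ : projSnd H) (l : J₂), (κ : G₂) * s l = g → κ = k₂ g ∧ l = jj₂ g)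
    (gt : G₂) : Equiv.Perm (MainVert H J₂) where
  toFun := mainPhi H s k₂ jj₂ θ gt
  invFun := mainPhi H s k₂ jj₂ θ gt⁻¹
  left_inv v := by
    rw [mainPhi_mul H s k₂ jj₂ θ hdec huniq, inv_mul_cancel,
      mainPhi_one H s k₂ jj₂ θ huniq]
  right_inv v := by
    rw [mainPhi_mul H s k₂ jj₂ θ hdec huniq, mul_inv_cancel,
      mainPhi_one H s k₂ jj₂ θ huniq]

end PhiLemmas
section RelLemmas

variable {G₁ G₂ : Type u} [Group G₁] [Group G₂]
variable (H : Subgroup (G₁ × G₂)) {Iι J₁ Iπ J₂ : Type u}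
variable (rι : Iι → kerFst H) (j₁0 : J₁) (r : J₁ → G₁)
variable (sπ : Iπ → projSnd H) (j₂0 : J₂) (s : J₂ → G₂)
variable (k₂ : G₂ → projSnd H) (jj₂ : G₂ → J₂) (θ : QuotFst H ≃* QuotSnd H)
variable (hdec : ∀ g : G₂, (k₂ g : G₂) * s (jj₂ g) = g)
variable (huniq : ∀ (g : G₂) (κ : projSnd H) (l : J₂), (κ : G₂) * s l = g → κ = k₂ g ∧ l = jj₂ g)

include hdec huniq in
theorem mainPhi_rel (gt : G₂) {i : FullLabel Iι J₁ Iπ J₂ j₁0 j₂0} {v w : MainVert H J₂}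
    (h : mainRel H j₁0 r sπ j₂0 s k₂ jj₂ θ i v w) :
    mainRel H j₁0 r sπ j₂0 s k₂ jj₂ θ i
      (mainPhi H s k₂ jj₂ θ gt v) (mainPhi H s k₂ jj₂ θ gt w) := by
  match i, v, w, h with
  | .inr (.inl i₂), .inl g, .inl g', h =>
    simp only [mainRel, mainPhi] at h ⊢
    rw [h, mul_assoc]
  | .inr (.inr t), .inl g, .inr (j, v), h =>
    obtain ⟨hj, hv⟩ := h
    subst hj; subst hv
    have key : g * gt⁻¹ = (k₂ g : G₂) * (s (jj₂ g) * gt⁻¹) := by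
      conv_lhs => rw [← hdec g]
      rw [mul_assoc]
    have hk := k2_mul H s k₂ jj₂ hdec huniq (k₂ g) (s (jj₂ g) * gt⁻¹)
    rw [← key] at hk
    simp only [mainRel, mainPhi]
    refine ⟨hk.2.symm, ?_⟩
    rw [hk.1, QuotientGroup.mk_mul, map_mul]
  | .inl i₁, .inr (j, v₁), .inr (j', v₂), h =>
    obtain ⟨hj, hrel⟩ := h
    subst hj
    match i₁, v₁, v₂, hrel with
    | .inl i, .inr u₁, .inr u₂, _ =>
      exact ⟨rfl, trivial⟩
    | .inr jl, .inr u₁, .inr u₂, _ =>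
      exact ⟨rfl, trivial⟩
    | .inl i, .inl a, .inl b, hrel =>
      simp only [auxRel] at hrel
      exact ⟨rfl, by simp only [mainPhi, auxRel]; rw [hrel]⟩
    | .inr jl, .inl a, .inl b, hrel =>
      obtain ⟨hm, hb⟩ := hrel
      subst hb
      exact ⟨rfl, ⟨hm, mul_assoc _ _ _⟩⟩
    | .inr jl, .inl a, .inr u, hrel =>
      exact ⟨rfl, hrel⟩
    | .inr jl, .inr u, .inl a, hrel =>
      exact ⟨rfl, hrel⟩

include hdec huniq in
theorem mainPhiPerm_mem (gt : G₂) :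
    mainPhiPerm H s k₂ jj₂ θ hdec huniq gt ∈ relAut (mainRel H (Iι := Iι) j₁0 r sπ j₂0 s k₂ jj₂ θ) := by
  intro i v w
  constructor
  · exact mainPhi_rel H j₁0 r sπ j₂0 s k₂ jj₂ θ hdec huniq gt
  · intro h
    have h2 := mainPhi_rel H j₁0 r sπ j₂0 s k₂ jj₂ θ hdec huniq gt⁻¹ h
    rwa [show (mainPhiPerm H s k₂ jj₂ θ hdec huniq gt : Equiv.Perm (MainVert H J₂)) v
        = mainPhi H s k₂ jj₂ θ gt v from rfl,
      show (mainPhiPerm H s k₂ jj₂ θ hdec huniq gt : Equiv.Perm (MainVert H J₂)) w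
        = mainPhi H s k₂ jj₂ θ gt w from rfl,
      mainPhi_mul H s k₂ jj₂ θ hdec huniq, inv_mul_cancel,
      mainPhi_one H s k₂ jj₂ θ huniq,
      mainPhi_mul H s k₂ jj₂ θ hdec huniq, inv_mul_cancel,
      mainPhi_one H s k₂ jj₂ θ huniq] at h2

/-- right multiplication as a permutation of `G₁`. -/
def cayPerm (g₁ : G₁) : Equiv.Perm G₁ := Equiv.mulRight g₁⁻¹

theorem cayPerm_mem (g₁ : G₁) :
    cayPerm g₁ ∈ relAut (cayRelFull H (Iπ := Iπ) rι j₁0 r j₂0) := by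
  intro i v w
  cases i with
  | inl i₁ =>
    simp only [cayRelFull, cayPerm, Equiv.coe_mulRight, ← mul_assoc, mul_left_inj]
  | inr _ => exact Iff.rfl

theorem cay_rigid (σ : Equiv.Perm G₁)
    (hσ : σ ∈ relAut (cayRelFull H (Iπ := Iπ) rι j₁0 r j₂0))
    (htop : Subgroup.closure (Set.range (cayGenFst H rι j₁0 r)) = ⊤) (g : G₁) :
    σ g = g * σ 1 := by
  let T : Subgroup G₁ :=
    { carrier := {x | ∀ g, σ (x * g) = x * σ g}
      one_mem' := by intro g; rw [one_mul, one_mul]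
      mul_mem' := fun {x y} hx hy g => by
        rw [mul_assoc, hx, hy, mul_assoc]
      inv_mem' := fun {x} hx g => by
        have h := hx (x⁻¹ * g)
        rw [mul_inv_cancel_left] at h
        rw [h, inv_mul_cancel_left] }
  have hle : Subgroup.closure (Set.range (cayGenFst H rι j₁0 r)) ≤ T := by
    rw [Subgroup.closure_le]
    rintro _ ⟨i, rfl⟩ g
    exact (hσ (.inl i) g (cayGenFst H rι j₁0 r i * g)).mp rfl
  have hmem : g ∈ T := hle (htop ▸ Subgroup.mem_top g)
  have := hmem 1
  rwa [mul_one] at this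

end RelLemmas
section CommuteLemma

variable {G₁ G₂ : Type u} [Group G₁] [Group G₂]
variable (H : Subgroup (G₁ × G₂)) {Iι J₁ Iπ J₂ : Type u}

theorem notMemTop {g : G₁} (hg : g ∉ projFst H) : projFst H ≠ ⊤ :=
  fun ht => hg (ht.symm ▸ Subgroup.mem_top g)

theorem commute_iff_mem (j₂0 : J₂) (s : J₂ → G₂) (k₂ : G₂ → projSnd H) (jj₂ : G₂ → J₂)
    (θ : QuotFst H ≃* QuotSnd H)
    (hs0 : s j₂0 = 1)
    (hdec : ∀ g : G₂, (k₂ g : G₂) * s (jj₂ g) = g)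
    (huniq : ∀ (g : G₂) (κ : projSnd H) (l : J₂), (κ : G₂) * s l = g → κ = k₂ g ∧ l = jj₂ g)
    (hθ : ∀ (x : projFst H) (y : projSnd H),
      θ (QuotientGroup.mk x) = QuotientGroup.mk y ↔ ((x : G₁), (y : G₂)) ∈ H)
    (g₁ : G₁) (g₂ : G₂) :
    (∀ g : G₁, mainPhi H s k₂ jj₂ θ g₂ (mainArrow H j₂0 g) = mainArrow H j₂0 (g * g₁⁻¹))
      ↔ (g₁, g₂) ∈ H := by
  constructor
  · intro hcom
    have h1 := hcom 1
    rw [mainArrow, mainArrow, phiZero_pos H (one_mem (projFst H))] at h1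
    simp only [mainPhi, hs0, one_mul] at h1
    rw [Sum.inr.injEq, Prod.mk.injEq] at h1
    obtain ⟨hj, hv⟩ := h1
    by_cases hP : g₁⁻¹ ∈ projFst H
    · rw [phiZero_pos H hP, Sum.inl.injEq] at hv
      rw [show (⟨1, one_mem (projFst H)⟩ : projFst H) = 1 from rfl,
        QuotientGroup.mk_one, one_mul] at hv
      have hθeq : θ (QuotientGroup.mk ⟨g₁⁻¹, hP⟩) = QuotientGroup.mk (k₂ g₂⁻¹) := by
        rw [← hv, MulEquiv.apply_symm_apply]
      have hmem := (hθ ⟨g₁⁻¹, hP⟩ (k₂ g₂⁻¹)).mp hθeq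
      have hk2 : (k₂ g₂⁻¹ : G₂) = g₂⁻¹ := by
        have := hdec g₂⁻¹
        rwa [hj, hs0, mul_one] at this
      rw [hk2] at hmem
      have := inv_mem hmem
      rwa [Prod.inv_mk, inv_inv, inv_inv] at this
    · rw [phiZero_neg H hP ⟨notMemTop H hP⟩] at hv
      exact absurd hv (by simp)
  · intro hH g
    have hg₁P : g₁ ∈ projFst H := ⟨(g₁, g₂), hH, rfl⟩
    have hg₂P : g₂ ∈ projSnd H := ⟨(g₁, g₂), hH, rfl⟩
    have hk := huniq g₂⁻¹ ⟨g₂⁻¹, inv_mem hg₂P⟩ j₂0 (by rw [hs0, mul_one])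
    have hsθ : θ.symm (QuotientGroup.mk (⟨g₂⁻¹, inv_mem hg₂P⟩ : projSnd H))
        = QuotientGroup.mk (⟨g₁⁻¹, inv_mem hg₁P⟩ : projFst H) := by
      rw [MulEquiv.symm_apply_eq]
      exact ((hθ ⟨g₁⁻¹, inv_mem hg₁P⟩ ⟨g₂⁻¹, inv_mem hg₂P⟩).mpr (inv_mem hH)).symm
    by_cases hg : g ∈ projFst H
    · rw [mainArrow, mainArrow, phiZero_pos H hg,
        phiZero_pos H (mul_mem hg (inv_mem hg₁P))]
      simp only [mainPhi, hs0, one_mul]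
      rw [← hk.1, ← hk.2, hsθ, ← QuotientGroup.mk_mul]
      rfl
    · have hgg : g * g₁⁻¹ ∉ projFst H := fun hm => hg (by
        have := mul_mem hm hg₁P
        rwa [inv_mul_cancel_right] at this)
      rw [mainArrow, mainArrow, phiZero_neg H hg ⟨notMemTop H hg⟩,
        phiZero_neg H hgg ⟨notMemTop H hg⟩]
      simp only [mainPhi, hs0, one_mul]
      rw [← hk.2]

theorem arrow_morphism (rι : Iι → kerFst H) (j₁0 : J₁) (r : J₁ → G₁)
    (sπ : Iπ → projSnd H) (j₂0 : J₂) (s : J₂ → G₂)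
    (k₂ : G₂ → projSnd H) (jj₂ : G₂ → J₂) (θ : QuotFst H ≃* QuotSnd H) :
    ∀ (i : FullLabel Iι J₁ Iπ J₂ j₁0 j₂0) (g g' : G₁),
      cayRelFull H rι j₁0 r j₂0 i g g' →
        mainRel H (Iι := Iι) j₁0 r sπ j₂0 s k₂ jj₂ θ i
          (mainArrow H j₂0 g) (mainArrow H j₂0 g') := by
  intro i g g' h
  match i with
  | .inr _ => exact absurd h (by simp [cayRelFull])
  | .inl i₁ =>
    rw [mainArrow, mainArrow]
    refine ⟨rfl, ?_⟩
    match i₁ with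
    | .inl i =>
      have hc : ((rι i : G₁)) ∈ kerFst H := (rι i).2
      have h' : g' = (rι i : G₁) * g := h
      by_cases hg : g ∈ projFst H
      · have hg' : g' ∈ projFst H := h' ▸ mul_mem (kerFst_le_projFst H hc) hg
        rw [phiZero_pos H hg, phiZero_pos H hg']
        show (QuotientGroup.mk ⟨g', hg'⟩ : QuotFst H) = QuotientGroup.mk ⟨g, hg⟩
        rw [show (⟨g', hg'⟩ : projFst H) = ⟨(rι i : G₁), kerFst_le_projFst H hc⟩ * ⟨g, hg⟩
            from Subtype.ext h', QuotientGroup.mk_mul,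
          (QuotientGroup.eq_one_iff (N := (kerFst H).subgroupOf (projFst H)) _).mpr
            (Subgroup.mem_subgroupOf.mpr hc), one_mul]
      · have hg' : g' ∉ projFst H := fun hm => hg (by
          rw [h'] at hm
          have := mul_mem (inv_mem (kerFst_le_projFst H hc)) hm
          rwa [inv_mul_cancel_left] at this)
        rw [phiZero_neg H hg ⟨notMemTop H hg⟩, phiZero_neg H hg' ⟨notMemTop H hg⟩]
        trivial
    | .inr jl =>
      have h' : g' = r jl.val * g := h
      by_cases hrj : r jl.val ∈ projFst H
      · by_cases hg : g ∈ projFst H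
        · have hg' : g' ∈ projFst H := h' ▸ mul_mem hrj hg
          rw [phiZero_pos H hg, phiZero_pos H hg']
          exact ⟨hrj, by
            rw [show (⟨g', hg'⟩ : projFst H) = ⟨r jl.val, hrj⟩ * ⟨g, hg⟩ from Subtype.ext h',
              QuotientGroup.mk_mul]⟩
        · have hg' : g' ∉ projFst H := fun hm => hg (by
            rw [h'] at hm
            have := mul_mem (inv_mem hrj) hm
            rwa [inv_mul_cancel_left] at this)
          rw [phiZero_neg H hg ⟨notMemTop H hg⟩, phiZero_neg H hg' ⟨notMemTop H hg⟩]
          trivial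
      · by_cases hg : g ∈ projFst H
        · have hg' : g' ∉ projFst H := fun hm => hrj (by
            rw [h'] at hm
            have := mul_mem hm (inv_mem hg)
            rwa [mul_inv_cancel_right] at this)
          rw [phiZero_pos H hg, phiZero_neg H hg' ⟨notMemTop H hg'⟩]
          exact hrj
        · by_cases hg' : g' ∈ projFst H
          · rw [phiZero_neg H hg ⟨notMemTop H hg⟩, phiZero_pos H hg']
            exact hrj
          · rw [phiZero_neg H hg ⟨notMemTop H hg⟩, phiZero_neg H hg' ⟨notMemTop H hg⟩]
            trivial

end CommuteLemma
section Rigidity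

variable {G₁ G₂ : Type u} [Group G₁] [Group G₂]
variable (H : Subgroup (G₁ × G₂)) {Iι J₁ Iπ J₂ : Type u}

theorem aut_rigid (rι : Iι → kerFst H) (j₁0 : J₁) (r : J₁ → G₁)
    (sπ : Iπ → projSnd H) (j₂0 : J₂) (s : J₂ → G₂)
    (k₂ : G₂ → projSnd H) (jj₂ : G₂ → J₂) (θ : QuotFst H ≃* QuotSnd H)
    (hr0 : r j₁0 = 1)
    (hcos : ∀ g : G₁, ∃! j : J₁, g * (r j)⁻¹ ∈ kerFst H)
    (hKgen : Subgroup.closure (Set.range fun i => ((rι i : G₁))) = kerFst H)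
    (hs0 : s j₂0 = 1)
    (hPgen : Subgroup.closure (Set.range fun i => ((sπ i : G₂))) = projSnd H)
    (hdec : ∀ g : G₂, (k₂ g : G₂) * s (jj₂ g) = g)
    (huniq : ∀ (g : G₂) (κ : projSnd H) (l : J₂), (κ : G₂) * s l = g → κ = k₂ g ∧ l = jj₂ g)
    (hθ : ∀ (x : projFst H) (y : projSnd H),
      θ (QuotientGroup.mk x) = QuotientGroup.mk y ↔ ((x : G₁), (y : G₂)) ∈ H)
    (p : relAut (cayRelFull H (Iπ := Iπ) rι j₁0 r j₂0) ×
        relAut (mainRel H (Iι := Iι) j₁0 r sπ j₂0 s k₂ jj₂ θ))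
    (hp : p ∈ relArrowAut (cayRelFull H (Iπ := Iπ) rι j₁0 r j₂0)
        (mainRel H (Iι := Iι) j₁0 r sπ j₂0 s k₂ jj₂ θ) (mainArrow H j₂0)) :
    ∃ (g₁ : G₁) (g₂ : G₂), (g₁, g₂) ∈ H ∧
      ⇑(p.1 : Equiv.Perm G₁) = (fun g => g * g₁⁻¹) ∧
      ⇑(p.2 : Equiv.Perm (MainVert H J₂)) = mainPhi H s k₂ jj₂ θ g₂ := by
  obtain ⟨⟨σ, hσ⟩, ⟨Φ, hΦ⟩⟩ := p
  simp only at hp ⊢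
  -- first component
  have hfun1 : ⇑σ = fun g => g * ((σ 1)⁻¹)⁻¹ := funext fun g => by
    rw [inv_inv]
    exact cay_rigid H rι j₁0 r j₂0 σ hσ (cayGenFst_top H rι j₁0 r hr0 hcos hKgen) g
  -- second component maps inl to inl
  have hinl : ∀ g : G₂, ∃ g', Φ (Sum.inl g) = Sum.inl g' := by
    intro g
    have hrel : mainRel H (Iι := Iι) j₁0 r sπ j₂0 s k₂ jj₂ θ (.inr (.inr PUnit.unit))
        (Sum.inl g) (Sum.inr (jj₂ g, Sum.inl (θ.symm (QuotientGroup.mk (k₂ g))))) := ⟨rfl, rfl⟩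
    have h2 := (hΦ _ _ _).mp hrel
    rcases hΦg : Φ (Sum.inl g) with g' | v
    · exact ⟨g', rfl⟩
    · rw [hΦg] at h2
      rcases h3 : Φ (Sum.inr (jj₂ g, Sum.inl (θ.symm (QuotientGroup.mk (k₂ g))))) with w | w <;>
        rw [h3] at h2 <;> exact False.elim h2
  choose ψ hψ using hinl
  -- equivariance of ψ
  have hψequiv : ∀ g : G₂, ψ g = g * ψ 1 := by
    intro g
    let T : Subgroup G₂ :=
      { carrier := {x | ∀ g, ψ (x * g) = x * ψ g}
        one_mem' := by intro g; rw [one_mul, one_mul]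
        mul_mem' := fun {x y} hx hy g => by rw [mul_assoc, hx, hy, mul_assoc]
        inv_mem' := fun {x} hx g => by
          have h := hx (x⁻¹ * g)
          rw [mul_inv_cancel_left] at h
          rw [h, inv_mul_cancel_left] }
    have hle : Subgroup.closure (Set.range (cayGenSnd H sπ j₂0 s)) ≤ T := by
      rw [Subgroup.closure_le]
      rintro _ ⟨i₂, rfl⟩ g
      have hrel : mainRel H (Iι := Iι) j₁0 r sπ j₂0 s k₂ jj₂ θ (.inr (.inl i₂))
          (Sum.inl g) (Sum.inl (cayGenSnd H sπ j₂0 s i₂ * g)) := rfl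
      have h2 := (hΦ _ _ _).mp hrel
      rw [hψ, hψ] at h2
      exact h2
    have hmem : g ∈ T :=
      hle ((cayGenSnd_top H sπ j₂0 s k₂ jj₂ hs0 hPgen hdec ▸ Subgroup.mem_top g))
    have := hmem 1
    rwa [mul_one] at this
  have hΦinl : ∀ g : G₂, Φ (Sum.inl g) = Sum.inl (g * ((ψ 1)⁻¹)⁻¹) := by
    intro g
    rw [hψ, hψequiv, inv_inv]
  -- second component on quotient vertices
  have hΦA : ∀ (j : J₂) (a : QuotFst H),
      Φ (Sum.inr (j, Sum.inl a)) = Sum.inr (jj₂ (s j * ((ψ 1)⁻¹)⁻¹),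
        Sum.inl (a * θ.symm (QuotientGroup.mk (k₂ (s j * ((ψ 1)⁻¹)⁻¹))))) := by
    intro j a
    obtain ⟨x, rfl⟩ := QuotientGroup.mk_surjective a
    obtain ⟨κ, hκ⟩ := QuotientGroup.mk_surjective (θ (QuotientGroup.mk x))
    have hk2s := k2_s H s k₂ jj₂ huniq j
    have hkg := k2_mul H s k₂ jj₂ hdec huniq κ (s j)
    rw [hk2s.1, mul_one] at hkg
    rw [hk2s.2] at hkg
    have hrel : mainRel H (Iι := Iι) j₁0 r sπ j₂0 s k₂ jj₂ θ (.inr (.inr PUnit.unit))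
        (Sum.inl ((κ : G₂) * s j)) (Sum.inr (j, Sum.inl (QuotientGroup.mk x))) := by
      refine ⟨hkg.2.symm, ?_⟩
      rw [hkg.1, hκ, MulEquiv.symm_apply_apply]
    have h2 := (hΦ _ _ _).mp hrel
    rw [hΦinl] at h2
    rcases h3 : Φ (Sum.inr (j, Sum.inl (QuotientGroup.mk x))) with w | ⟨j', v⟩
    · rw [h3] at h2; exact False.elim h2
    · rw [h3] at h2
      obtain ⟨hj', hv⟩ := h2
      rw [hj', hv]
      have hmul := k2_mul H s k₂ jj₂ hdec huniq κ (s j * ((ψ 1)⁻¹)⁻¹)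
      rw [show (κ : G₂) * s j * ((ψ 1)⁻¹)⁻¹ = (κ : G₂) * (s j * ((ψ 1)⁻¹)⁻¹) from
        mul_assoc _ _ _, hmul.1, hmul.2, QuotientGroup.mk_mul, map_mul, hκ,
        MulEquiv.symm_apply_apply]
  -- second component on the extra vertices
  have hΦU : ∀ (j : J₂) (u : PLift (projFst H ≠ ⊤)),
      Φ (Sum.inr (j, Sum.inr u)) = Sum.inr (jj₂ (s j * ((ψ 1)⁻¹)⁻¹), Sum.inr u) := by
    intro j u
    have hex : ∃ g0 : G₁, g0 ∉ projFst H := by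
      by_contra hc
      push_neg at hc
      exact u.down (eq_top_iff.mpr fun x _ => hc x)
    obtain ⟨g0, hg0⟩ := hex
    obtain ⟨js, hjs, -⟩ := hcos g0
    have hrjs : r js ∉ projFst H := fun hm => hg0 (by
      have := mul_mem (kerFst_le_projFst H hjs) hm
      rwa [inv_mul_cancel_right] at this)
    have hjs0 : js ≠ j₁0 := fun he => hrjs (by rw [he, hr0]; exact one_mem _)
    have hrel : mainRel H (Iι := Iι) j₁0 r sπ j₂0 s k₂ jj₂ θ (.inl (.inr ⟨js, hjs0⟩))
        (Sum.inr (j, Sum.inl (1 : QuotFst H))) (Sum.inr (j, Sum.inr u)) := ⟨rfl, hrjs⟩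
    have h2 := (hΦ _ _ _).mp hrel
    rw [hΦA j 1] at h2
    rcases h3 : Φ (Sum.inr (j, Sum.inr u)) with w | ⟨j', v⟩
    · rw [h3] at h2; exact False.elim h2
    · rw [h3] at h2
      obtain ⟨hj', hrel2⟩ := h2
      rw [hj']
      rcases v with a | u'
      · obtain ⟨hm, -⟩ := hrel2
        exact absurd hm hrjs
      · rw [Subsingleton.elim u' u]
  -- assemble
  refine ⟨(σ 1)⁻¹, (ψ 1)⁻¹, ?_, hfun1, ?_⟩
  · have hΦfun : ⇑Φ = mainPhi H s k₂ jj₂ θ ((ψ 1)⁻¹) := by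
      funext v
      match v with
      | .inl g => exact hΦinl g
      | .inr (j, .inl a) => exact hΦA j a
      | .inr (j, .inr u) => exact hΦU j u
    refine (commute_iff_mem H j₂0 s k₂ jj₂ θ hs0 hdec huniq hθ (σ 1)⁻¹ ((ψ 1)⁻¹)).mp ?_
    intro g
    rw [← hΦfun, ← hp g, inv_inv]
    exact congrArg _ (cay_rigid H rι j₁0 r j₂0 σ hσ
      (cayGenFst_top H rι j₁0 r hr0 hcos hKgen) g)
  · funext v
    match v with
    | .inl g => exact hΦinl g
    | .inr (j, .inl a) => exact hΦA j a
    | .inr (j, .inr u) => exact hΦU j u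

end Rigidity
/-- The pair `(φ_{g̃₁}, Φ_{g̃₂})` commutes with the morphism `φ' : Cay(G₁, R) → G₂'`
if and only if `(g̃₁, g̃₂) ∈ H`; consequently
`Aut_I(φ') = {(φ_{g̃₁}, Φ_{g̃₂}) | (g̃₁, g̃₂) ∈ H}` and `Aut_I(φ') ≅ H`. -/
theorem arrow_automorphisms_are_H {G₁ G₂ : Type u} [Group G₁] [Group G₂]
    (H : Subgroup (G₁ × G₂)) {Iι J₁ Iπ J₂ : Type u}
    (rι : Iι → kerFst H) (j₁0 : J₁) (r : J₁ → G₁)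
    (sπ : Iπ → projSnd H) (j₂0 : J₂) (s : J₂ → G₂)
    (k₂ : G₂ → projSnd H) (jj₂ : G₂ → J₂) (θ : QuotFst H ≃* QuotSnd H)
    (hr0 : r j₁0 = 1)
    (hcos : ∀ g : G₁, ∃! j : J₁, g * (r j)⁻¹ ∈ kerFst H)
    (hKgen : Subgroup.closure (Set.range fun i => ((rι i : G₁))) = kerFst H)
    (hs0 : s j₂0 = 1)
    (hPgen : Subgroup.closure (Set.range fun i => ((sπ i : G₂))) = projSnd H)
    (hdec : ∀ g : G₂, (k₂ g : G₂) * s (jj₂ g) = g)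
    (huniq : ∀ (g : G₂) (κ : projSnd H) (l : J₂), (κ : G₂) * s l = g → κ = k₂ g ∧ l = jj₂ g)
    (hθ : ∀ (x : projFst H) (y : projSnd H),
      θ (QuotientGroup.mk x) = QuotientGroup.mk y ↔ ((x : G₁), (y : G₂)) ∈ H)
 :
    (∀ (i : FullLabel Iι J₁ Iπ J₂ j₁0 j₂0) (g g' : G₁),
      cayRelFull H rι j₁0 r j₂0 i g g' →
        mainRel H (Iι := Iι) j₁0 r sπ j₂0 s k₂ jj₂ θ i
          (mainArrow H j₂0 g) (mainArrow H j₂0 g')) ∧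
    (∀ (g₁ : G₁) (g₂ : G₂),
      (∀ g : G₁, mainPhi H s k₂ jj₂ θ g₂ (mainArrow H j₂0 g) = mainArrow H j₂0 (g * g₁⁻¹))
        ↔ (g₁, g₂) ∈ H) ∧
    (∀ p : relAut (cayRelFull H (Iπ := Iπ) rι j₁0 r j₂0) ×
        relAut (mainRel H (Iι := Iι) j₁0 r sπ j₂0 s k₂ jj₂ θ),
      p ∈ relArrowAut (cayRelFull H (Iπ := Iπ) rι j₁0 r j₂0)
          (mainRel H (Iι := Iι) j₁0 r sπ j₂0 s k₂ jj₂ θ) (mainArrow H j₂0) ↔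
        ∃ (g₁ : G₁) (g₂ : G₂), (g₁, g₂) ∈ H ∧
          ⇑(p.1 : Equiv.Perm G₁) = (fun g => g * g₁⁻¹) ∧
          ⇑(p.2 : Equiv.Perm (MainVert H J₂)) = mainPhi H s k₂ jj₂ θ g₂) ∧
    Nonempty (relArrowAut (cayRelFull H (Iπ := Iπ) rι j₁0 r j₂0)
        (mainRel H (Iι := Iι) j₁0 r sπ j₂0 s k₂ jj₂ θ) (mainArrow H j₂0) ≃* H) := by

  refine ⟨arrow_morphism H rι j₁0 r sπ j₂0 s k₂ jj₂ θ,
    fun g₁ g₂ => commute_iff_mem H j₂0 s k₂ jj₂ θ hs0 hdec huniq hθ g₁ g₂, ?_, ?_⟩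
  · intro p
    constructor
    · exact aut_rigid H rι j₁0 r sπ j₂0 s k₂ jj₂ θ hr0 hcos hKgen hs0 hPgen hdec huniq hθ p
    · rintro ⟨g₁, g₂, hH, h1, h2⟩
      intro v
      show mainArrow H j₂0 ((p.1 : Equiv.Perm G₁) v)
        = (p.2 : Equiv.Perm (MainVert H J₂)) (mainArrow H j₂0 v)
      rw [h1, h2]
      exact ((commute_iff_mem H j₂0 s k₂ jj₂ θ hs0 hdec huniq hθ g₁ g₂).mpr hH v).symm
  · let F : H →* relArrowAut (cayRelFull H (Iπ := Iπ) rι j₁0 r j₂0)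
        (mainRel H (Iι := Iι) j₁0 r sπ j₂0 s k₂ jj₂ θ) (mainArrow H j₂0) :=
      MonoidHom.mk' (fun h =>
        ⟨(⟨cayPerm h.1.1, cayPerm_mem H rι j₁0 r j₂0 h.1.1⟩,
          ⟨mainPhiPerm H s k₂ jj₂ θ hdec huniq h.1.2,
            mainPhiPerm_mem H j₁0 r sπ j₂0 s k₂ jj₂ θ hdec huniq h.1.2⟩),
          fun v => ((commute_iff_mem H j₂0 s k₂ jj₂ θ hs0 hdec huniq hθ
            h.1.1 h.1.2).mpr h.2 v).symm⟩)
        (fun a b => by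
          apply Subtype.ext
          apply Prod.ext
          · apply Subtype.ext
            apply Equiv.ext
            intro v
            show v * (a.1.1 * b.1.1)⁻¹ = (v * b.1.1⁻¹) * a.1.1⁻¹
            rw [mul_inv_rev, mul_assoc]
          · apply Subtype.ext
            apply Equiv.ext
            intro v
            show mainPhi H s k₂ jj₂ θ (a.1.2 * b.1.2) v
              = mainPhi H s k₂ jj₂ θ a.1.2 (mainPhi H s k₂ jj₂ θ b.1.2 v)
            rw [mainPhi_mul H s k₂ jj₂ θ hdec huniq])
    have hinj : Function.Injective F := by
      intro a b hab
      have h1 : ((F a : _).1.1 : Equiv.Perm G₁) 1 = ((F b : _).1.1 : Equiv.Perm G₁) 1 := by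
        rw [hab]
      have h1' : 1 * a.1.1⁻¹ = 1 * b.1.1⁻¹ := h1
      rw [one_mul, one_mul] at h1'
      have h2 : ((F a : _).1.2 : Equiv.Perm (MainVert H J₂)) (Sum.inl 1)
          = ((F b : _).1.2 : Equiv.Perm (MainVert H J₂)) (Sum.inl 1) := by
        rw [hab]
      have h2' : (Sum.inl (1 * a.1.2⁻¹) : MainVert H J₂) = Sum.inl (1 * b.1.2⁻¹) := h2
      simp only [Sum.inl.injEq, one_mul] at h2'
      apply Subtype.ext
      exact Prod.ext (inv_injective h1') (inv_injective h2')
    have hsurj : Function.Surjective F := by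
      rintro ⟨p, hp⟩
      obtain ⟨g₁, g₂, hH, h1, h2⟩ := aut_rigid H rι j₁0 r sπ j₂0 s k₂ jj₂ θ
        hr0 hcos hKgen hs0 hPgen hdec huniq hθ p hp
      refine ⟨⟨(g₁, g₂), hH⟩, ?_⟩
      apply Subtype.ext
      apply Prod.ext
      · apply Subtype.ext
        apply Equiv.ext
        intro v
        show v * g₁⁻¹ = (p.1 : Equiv.Perm G₁) v
        rw [h1]
      · apply Subtype.ext
        apply Equiv.ext
        intro v
        show mainPhi H s k₂ jj₂ θ g₂ v = (p.2 : Equiv.Perm (MainVert H J₂)) v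
        rw [h2]
    exact ⟨(MulEquiv.ofBijective F ⟨hinj, hsurj⟩).symm⟩
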